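/- Let p : W₂ → V and q : W₁ → V be covering maps between connected, locally path-connected topological spaces, and let γ : W₂ → W₁ be a continuous map with q ∘ γ = p. If for some point v ∈ V the fibers p⁻¹(v) and q⁻¹(v) are finite of equal cardinality, then γ is a homeomorphism. -/

import Mathlib

open Set Function

/-- For a covering map, fibers over points in the same connected (preconnected) base are
equivalent; proved by a clopen argument. -/
theorem IsCoveringMap.nonempty_fiber_equiv {E X : Type*} [TopologicalSpace E]
    [TopologicalSpace X] [PreconnectedSpace X] {f : E → X} (hf : IsCoveringMap f)
    (v x : X) : Nonempty (↥(f ⁻¹' {x}) ≃ ↥(f ⁻¹' {v})) := by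
  set C : Set X := {x | Nonempty (↥(f ⁻¹' {x}) ≃ ↥(f ⁻¹' {v}))} with hC
  have key : ∀ y : X, ∃ U : Set X, IsOpen U ∧ y ∈ U ∧ ∀ x' ∈ U,
      Nonempty (↥(f ⁻¹' {x'}) ≃ ↥(f ⁻¹' {y})) := fun y => by
    obtain ⟨hd, U, hyU, hU, hfU, H, hH⟩ := hf y
    exact ⟨U, hU, hyU, fun x' hx' =>
      ⟨(IsEvenlyCovered.fiberHomeomorph (f := f) (x := x')
        ⟨hd, U, hx', hU, hfU, H, hH⟩).toEquiv.symm⟩⟩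
  have hopen : IsOpen C := by
    rw [isOpen_iff_mem_nhds]
    intro y hy
    obtain ⟨U, hU, hyU, hk⟩ := key y
    refine Filter.mem_of_superset (hU.mem_nhds hyU) ?_
    intro x' hx'
    exact ⟨((hk x' hx').some).trans hy.some⟩
  have hclosed : IsClosed C := by
    rw [← isOpen_compl_iff, isOpen_iff_mem_nhds]
    intro y hy
    obtain ⟨U, hU, hyU, hk⟩ := key y
    refine Filter.mem_of_superset (hU.mem_nhds hyU) ?_
    intro x' hx' hx'C
    exact hy ⟨((hk x' hx').some.symm).trans hx'C.some⟩
  have hCuniv : C = univ := by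
    rcases isClopen_iff.mp ⟨hclosed, hopen⟩ with h | h
    · have : v ∈ C := ⟨Equiv.refl _⟩
      rw [h] at this
      exact absurd this (notMem_empty v)
    · exact h
  have : x ∈ C := hCuniv ▸ mem_univ x
  exact this

/-- Let `p : W₂ → V` and `q : W₁ → V` be covering maps between connected, locally
path-connected spaces and let `γ : W₂ → W₁` be continuous with `q ∘ γ = p`.  If for some
point `v ∈ V` the fibers `p⁻¹(v)` and `q⁻¹(v)` are finite of equal cardinality, then `γ`
is a homeomorphism. -/
theorem isHomeomorph_of_coveringMaps_of_card_fiber_eq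
    {V W₁ W₂ : Type*} [TopologicalSpace V] [TopologicalSpace W₁] [TopologicalSpace W₂]
    [ConnectedSpace V] [ConnectedSpace W₁] [ConnectedSpace W₂]
    [LocallyPathConnectedSpace V] [LocallyPathConnectedSpace W₁] [LocallyPathConnectedSpace W₂]
    (p : W₂ → V) (q : W₁ → V) (γ : W₂ → W₁)
    (hp : IsCoveringMap p) (hq : IsCoveringMap q)
    (hγ : Continuous γ) (hcomp : q ∘ γ = p)
    (v : V) (hpfin : (p ⁻¹' {v}).Finite) (hqfin : (q ⁻¹' {v}).Finite)
    (hcard : Nat.card (p ⁻¹' {v}) = Nat.card (q ⁻¹' {v})) :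
    IsHomeomorph γ := by
  have hqγ : ∀ x, q (γ x) = p x := fun x => congrFun hcomp x
  -- γ is a local homeomorphism, hence open and continuous
  have hγl : IsLocalHomeomorph γ :=
    IsLocalHomeomorph.of_comp (hcomp ▸ hp.isLocalHomeomorph) hq.isLocalHomeomorph hγ
  -- Surjectivity
  have hsurj : Surjective γ := by
    have hclosed : IsClosed (range γ) := by
      rw [← closure_subset_iff_isClosed]
      intro w hw
      set v' : V := q w with hv'
      haveI : Nonempty ↥(q ⁻¹' {v'}) := ⟨⟨w, rfl⟩⟩
      haveI : Nonempty ↥(p ⁻¹' {v'}) := by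
        obtain ⟨x⟩ := (inferInstance : Nonempty W₂)
        obtain ⟨e⟩ := hp.nonempty_fiber_equiv (p x) v'
        exact ⟨e.symm ⟨x, rfl⟩⟩
      set s := (hq v').toTrivialization with hs
      set t := (hp v').toTrivialization with ht
      have hvs : v' ∈ s.baseSet := (hq v').mem_toTrivialization_baseSet
      have hvt : v' ∈ t.baseSet := (hp v').mem_toTrivialization_baseSet
      set U : Set V := pathComponentIn (t.baseSet ∩ s.baseSet) v' with hU
      have hvU : v' ∈ U := mem_pathComponentIn_self ⟨hvt, hvs⟩
      have hUt : U ⊆ t.baseSet := fun u hu => (pathComponentIn_subset hu).1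
      have hUs : U ⊆ s.baseSet := fun u hu => (pathComponentIn_subset hu).2
      have hUopen : IsOpen U := (t.open_baseSet.inter s.open_baseSet).pathComponentIn _
      have hUconn : IsPreconnected U :=
        (isPathConnected_pathComponentIn (mem_inter hvt hvs)).isConnected.isPreconnected
      haveI : DiscreteTopology ↥(q ⁻¹' {v'}) := (hq v').1
      set j := (s w).2 with hj
      set T : Set W₁ := s.source ∩ s ⁻¹' (U ×ˢ ({j} : Set ↥(q ⁻¹' {v'}))) with hT
      set T' : Set W₁ := s.source ∩ s ⁻¹' (U ×ˢ ({j}ᶜ : Set ↥(q ⁻¹' {v'}))) with hT'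
      have hTopen : IsOpen T := s.continuousOn_toFun.isOpen_inter_preimage s.open_source
        (hUopen.prod (isOpen_discrete _))
      have hT'open : IsOpen T' := s.continuousOn_toFun.isOpen_inter_preimage s.open_source
        (hUopen.prod (isOpen_discrete _))
      have hdisj : Disjoint T T' := by
        rw [Set.disjoint_left]
        intro z hz hz'
        exact hz'.2.2 hz.2.2
      have hqU_source : ∀ z : W₁, q z ∈ U → z ∈ s.source := fun z hz =>
        s.mem_source.mpr (hUs hz)
      have hcover : q ⁻¹' U ⊆ T ∪ T' := by
        intro z hz
        have hzs : z ∈ s.source := hqU_source z hz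
        have h1 : (s z).1 = q z := s.coe_fst hzs
        by_cases hcase : (s z).2 = j
        · exact Or.inl ⟨hzs, by rw [Set.mem_preimage, Set.mem_prod, h1]; exact ⟨hz, hcase⟩⟩
        · exact Or.inr ⟨hzs, by rw [Set.mem_preimage, Set.mem_prod, h1]; exact ⟨hz, hcase⟩⟩
      have hwT : w ∈ T :=
        ⟨hqU_source w hvU, by
          rw [Set.mem_preimage, Set.mem_prod, s.coe_fst (hqU_source w hvU)]
          exact ⟨hvU, rfl⟩⟩
      -- get a point of the range inside T
      obtain ⟨z₀, hz₀T, x₀, hx₀⟩ : (T ∩ range γ).Nonempty :=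
        mem_closure_iff.mp hw T hTopen hwT
      haveI : DiscreteTopology ↥(p ⁻¹' {v'}) := (hp v').1
      set i := (t x₀).2 with hi
      set S : Set W₂ := t.toOpenPartialHomeomorph.symm '' (U ×ˢ ({i} : Set ↥(p ⁻¹' {v'}))) with hS
      have hqz₀U : q z₀ ∈ U := by rw [← s.coe_fst hz₀T.1]; exact hz₀T.2.1
      have hpx₀ : p x₀ ∈ U := by rw [← hqγ, hx₀]; exact hqz₀U
      have hx₀source : x₀ ∈ t.source := t.mem_source.mpr (hUt hpx₀)
      have hx₀S : x₀ ∈ S := by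
        refine ⟨t x₀, ⟨?_, rfl⟩, t.toOpenPartialHomeomorph.left_inv hx₀source⟩
        rwa [t.coe_fst hx₀source]
      -- p maps S to U, so γ '' S ⊆ q ⁻¹' U
      have hpS : ∀ y ∈ S, p y ∈ U := by
        rintro y ⟨⟨u, k⟩, ⟨hu, hk⟩, rfl⟩
        rwa [t.proj_symm_apply (t.mem_target.mpr (hUt hu))]
      have hγS_sub : γ '' S ⊆ T ∪ T' := fun z ⟨y, hy, hz⟩ =>
        hcover (by rw [Set.mem_preimage, ← hz, hqγ]; exact hpS y hy)
      have hSconn : IsPreconnected S := by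
        refine IsPreconnected.image ?_ _ (t.toOpenPartialHomeomorph.continuousOn_symm.mono ?_)
        · exact hUconn.prod isPreconnected_singleton
        · rintro ⟨u, k⟩ ⟨hu, -⟩
          exact t.mem_target.mpr (hUt hu)
      have hγSconn : IsPreconnected (γ '' S) := hSconn.image γ hγ.continuousOn
      have hγS_T : γ '' S ⊆ T := by
        refine hγSconn.subset_left_of_subset_union hTopen hT'open hdisj hγS_sub ?_
        exact ⟨z₀, ⟨x₀, hx₀S, hx₀⟩, hz₀T⟩
      -- the point over v' in S maps to w
      set y₀ : W₂ := t.toOpenPartialHomeomorph.symm (v', i) with hy₀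
      have hy₀S : y₀ ∈ S := ⟨(v', i), ⟨hvU, rfl⟩, rfl⟩
      have hγy₀T : γ y₀ ∈ T := hγS_T ⟨y₀, hy₀S, rfl⟩
      have hqγy₀ : q (γ y₀) = v' := by
        rw [hqγ, hy₀, t.proj_symm_apply (t.mem_target.mpr hvt)]
      have : γ y₀ = w := by
        apply s.injOn hγy₀T.1 hwT.1
        have h1 : (s (γ y₀)).1 = q (γ y₀) := s.coe_fst hγy₀T.1
        have h2 : (s w).1 = q w := s.coe_fst hwT.1
        have h3 : (s (γ y₀)).2 = j := hγy₀T.2.2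
        show s (γ y₀) = s w
        apply Prod.ext
        · rw [h1, h2, hqγy₀]
        · rw [h3]
      exact ⟨y₀, this⟩
    have : range γ = univ := by
      rcases isClopen_iff.mp ⟨hclosed, hγl.isOpenMap.isOpen_range⟩ with h | h
      · obtain ⟨x⟩ := (inferInstance : Nonempty W₂)
        have : γ x ∈ range γ := mem_range_self x
        rw [h] at this
        exact absurd this (notMem_empty _)
      · exact h
    exact range_eq_univ.mp this
  -- Injectivity by fiber counting
  have hinj : Injective γ := by
    intro a b hab
    have hpab : p a = p b := by rw [← hqγ, ← hqγ, hab]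
    set v' : V := p a with hv'
    -- equivalence between the two fibers over v'
    haveI : Finite ↥(p ⁻¹' {v}) := hpfin.to_subtype
    haveI : Finite ↥(q ⁻¹' {v}) := hqfin.to_subtype
    obtain ⟨ep⟩ := hp.nonempty_fiber_equiv v v'
    obtain ⟨eq'⟩ := hq.nonempty_fiber_equiv v v'
    obtain ⟨e0⟩ : Nonempty (↥(p ⁻¹' {v}) ≃ ↥(q ⁻¹' {v})) := Finite.card_eq.mp hcard
    set e : ↥(p ⁻¹' {v'}) ≃ ↥(q ⁻¹' {v'}) := ep.trans (e0.trans eq'.symm) with he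
    haveI : Finite ↥(p ⁻¹' {v'}) := Finite.of_equiv _ ep.symm
    -- γ restricted to fibers
    set g : ↥(p ⁻¹' {v'}) → ↥(q ⁻¹' {v'}) := fun x => ⟨γ x.1, by
      have := x.2
      simp only [mem_preimage, mem_singleton_iff] at this ⊢
      rw [hqγ, this]⟩ with hg
    have hgsurj : Surjective g := by
      rintro ⟨z, hz⟩
      obtain ⟨x, rfl⟩ := hsurj z
      simp only [mem_preimage, mem_singleton_iff, hqγ] at hz
      exact ⟨⟨x, hz⟩, rfl⟩
    have hginj : Injective g := by
      have hcomp_surj : Surjective (e.symm ∘ g) := e.symm.surjective.comp hgsurj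
      have : Injective (e.symm ∘ g) := Finite.injective_iff_surjective.mpr hcomp_surj
      exact (Injective.of_comp this)
    have ha : a ∈ p ⁻¹' {v'} := rfl
    have hb : b ∈ p ⁻¹' {v'} := hpab.symm
    have : g ⟨a, ha⟩ = g ⟨b, hb⟩ := Subtype.ext hab
    exact congrArg Subtype.val (hginj this)
  exact ⟨hγ, hγl.isOpenMap, hinj, hsurj⟩
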